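/- Let n ≥ 3, let e be an integer with e ∉ {−1, 0, 1}, and let α ∈ Sₙ be a cyclic permutation of length n. If d = gcd(n, eⁿ − 1) (gcd of the integer n and the integer eⁿ − 1) satisfies d ≠ 1, then the power conjugate equation (e*α) has a non-trivial solution y ≠ 1 such that y^d = 1. -/

import Mathlib

open Equiv

private lemma aux_pow_mod {e : ℤ} {p : ℕ} {m : ℕ} (hm : e ^ m ≡ 1 [ZMOD p]) (a : ℕ) :
    e ^ a ≡ e ^ (a % m) [ZMOD p] := by
  conv_lhs => rw [← Nat.div_add_mod a m, pow_add, pow_mul]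
  calc (e ^ m) ^ (a / m) * e ^ (a % m)
      ≡ 1 ^ (a / m) * e ^ (a % m) [ZMOD (p : ℤ)] := (hm.pow _).mul_right _
    _ = e ^ (a % m) := by rw [one_pow, one_mul]

/-- transporting permutations along an equiv, as a `MulEquiv`. -/
private def permMulEquiv {α β : Type*} (ε : α ≃ β) : Equiv.Perm α ≃* Equiv.Perm β :=
  { ε.permCongr with
    map_mul' := fun a b => by
      ext x
      simp [Equiv.permCongr_apply, Equiv.Perm.mul_apply] }

private lemma permMulEquiv_apply {α β : Type*} (ε : α ≃ β) (q : Equiv.Perm α) (x : β) :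
    permMulEquiv ε q x = ε (q (ε.symm x)) := rfl

private lemma isCycle_permMulEquiv {α β : Type*} (ε : α ≃ β) {q : Equiv.Perm α}
    (h : q.IsCycle) : (permMulEquiv ε q).IsCycle := by
  obtain ⟨x, hx, hsc⟩ := h
  refine ⟨ε x, ?_, ?_⟩
  · rw [permMulEquiv_apply]
    simp only [Equiv.symm_apply_apply]
    intro h'
    exact hx (ε.injective h')
  · intro y hy
    have hy' : q (ε.symm y) ≠ ε.symm y := by
      intro h'
      apply hy
      rw [permMulEquiv_apply, h', Equiv.apply_symm_apply]
    obtain ⟨i, hi⟩ := hsc hy'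
    refine ⟨i, ?_⟩
    rw [← map_zpow, permMulEquiv_apply, Equiv.symm_apply_apply, hi, Equiv.apply_symm_apply]

private lemma zmod_solution (n : ℕ) (hn : 3 ≤ n) (e : ℤ)
    (d : ℕ) (hd : d = Int.gcd (n : ℤ) (e ^ n - 1)) (hd1 : d ≠ 1) :
    ∃ y : Equiv.Perm (ZMod n), y ≠ 1 ∧
      (Equiv.addRight (1 : ZMod n)) * y * (Equiv.addRight (1 : ZMod n))⁻¹ = y ^ e ∧
      y ^ d = 1 := by
  haveI : NeZero n := ⟨by omega⟩
  haveI : Fact (1 < n) := ⟨by omega⟩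
  -- a prime divisor of `d`
  set p := d.minFac with hpdef
  have hp : p.Prime := Nat.minFac_prime hd1
  have hpd : p ∣ d := Nat.minFac_dvd d
  have hdn : d ∣ n := by
    have : (d : ℤ) ∣ (n : ℤ) := hd ▸ Int.gcd_dvd_left _ _
    exact_mod_cast this
  have hpn : p ∣ n := hpd.trans hdn
  have hpe : (p : ℤ) ∣ e ^ n - 1 :=
    (Int.natCast_dvd_natCast.mpr hpd).trans (hd ▸ Int.gcd_dvd_right _ _)
  set m := n / p with hmdef
  have hnm : n = m * p := (Nat.div_mul_cancel hpn).symm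
  have hm0 : m ≠ 0 := by
    intro h
    rw [h, zero_mul] at hnm
    omega
  have hmpos : 0 < m := Nat.pos_of_ne_zero hm0
  have hmn : m < n := by
    rw [hnm]
    exact (Nat.lt_mul_iff_one_lt_right hmpos).mpr hp.one_lt
  have hmdvd : m ∣ n := ⟨p, hnm⟩
  -- `e ^ n ≡ 1 [ZMOD p]`
  have hen : e ^ n ≡ 1 [ZMOD (p : ℤ)] := (Int.modEq_iff_dvd.mpr hpe).symm
  -- `e ^ m ≡ 1 [ZMOD p]`
  have hem : e ^ m ≡ 1 [ZMOD (p : ℤ)] := by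
    haveI : Fact p.Prime := ⟨hp⟩
    have h1 : (e : ZMod p) ^ n = 1 := by
      have := (ZMod.intCast_eq_intCast_iff _ _ _).mpr hen
      push_cast at this
      exact this
    have hne : (e : ZMod p) ≠ 0 := by
      intro h
      rw [h, zero_pow (by omega : n ≠ 0)] at h1
      exact zero_ne_one h1
    have hdvd1 : orderOf (e : ZMod p) ∣ n := orderOf_dvd_of_pow_eq_one h1
    have hdvd2 : orderOf (e : ZMod p) ∣ p - 1 :=
      orderOf_dvd_of_pow_eq_one (ZMod.pow_card_sub_one_eq_one hne)
    have hcop : Nat.Coprime (orderOf (e : ZMod p)) p := by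
      rw [Nat.coprime_comm]
      refine (Nat.Prime.coprime_iff_not_dvd hp).mpr (fun hdd => ?_)
      have h2 : 0 < p - 1 := by have := hp.two_le; omega
      have h3 : orderOf (e : ZMod p) ≤ p - 1 := Nat.le_of_dvd h2 hdvd2
      have h4 : 0 < orderOf (e : ZMod p) := by
        rcases Nat.eq_zero_or_pos (orderOf (e : ZMod p)) with h | h
        · rw [h] at hdvd2
          have := Nat.eq_zero_of_zero_dvd hdvd2
          omega
        · exact h
      have h5 : p ≤ orderOf (e : ZMod p) := Nat.le_of_dvd h4 hdd
      omega
    have hOm : orderOf (e : ZMod p) ∣ m :=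
      hcop.dvd_of_dvd_mul_right (by rwa [← hnm])
    have h2 : (e : ZMod p) ^ m = 1 := orderOf_dvd_iff_pow_eq_one.mp hOm
    refine (ZMod.intCast_eq_intCast_iff _ _ _).mp ?_
    push_cast
    exact h2
  -- key congruence
  have hnmZ : (n : ℤ) = (m : ℤ) * (p : ℤ) := by exact_mod_cast hnm
  have A : ∀ a b : ℕ, a % m = b % m →
      (((m : ℤ) * e ^ a : ℤ) : ZMod n) = (((m : ℤ) * e ^ b : ℤ) : ZMod n) := by
    intro a b hab
    refine (ZMod.intCast_eq_intCast_iff _ _ _).mpr ?_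
    have h1 : e ^ a ≡ e ^ b [ZMOD (p : ℤ)] :=
      ((aux_pow_mod hem a).trans (by rw [hab])).trans (aux_pow_mod hem b).symm
    have h2 := h1.mul_left' (c := (m : ℤ))
    rwa [← hnmZ] at h2
  -- the building blocks of the permutation
  set f : ZMod n → ZMod n := fun x => (((m : ℤ) * e ^ (n - x.val) : ℤ) : ZMod n) with hf
  have hfmul : ∀ x : ZMod n, f x = (m : ZMod n) * ((e : ZMod n)) ^ (n - x.val) := by
    intro x
    rw [hf]
    push_cast
    ring
  -- `f` only depends on `x.val % m`
  have hfdep : ∀ x x' : ZMod n, x.val % m = x'.val % m → f x = f x' := by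
    intro x x' hxx
    apply A
    have h1 : (n - x.val) + x.val = n := Nat.sub_add_cancel x.val_lt.le
    have h2 : (n - x'.val) + x'.val = n := Nat.sub_add_cancel x'.val_lt.le
    have h3 : Nat.ModEq m ((n - x.val) + x.val) ((n - x'.val) + x'.val) := by
      rw [h1, h2]
    exact Nat.ModEq.add_right_cancel hxx h3
  -- divisibility of values
  have hkey : ∀ a : ℕ, m ∣ a → m ∣ a % n := by
    intro a ha
    have h1 := Nat.mod_add_div a n
    have h2 : a % n = a - n * (a / n) := by omega
    rw [h2]
    exact Nat.dvd_sub ha (Dvd.dvd.mul_right hmdvd _)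
  have hB : ∀ w : ZMod n, m ∣ ((m : ZMod n) * w).val := by
    intro w
    rw [ZMod.val_mul, ZMod.val_cast_of_lt hmn]
    exact hkey _ (dvd_mul_right m _)
  have hfval : ∀ x : ZMod n, m ∣ (f x).val := by
    intro x
    rw [hfmul]
    exact hB _
  -- adding an `m`-divisible element preserves `val % m`
  have hC : ∀ x z : ZMod n, m ∣ z.val → (x + z).val % m = x.val % m := by
    intro x z hz
    rw [ZMod.val_add, Nat.mod_mod_of_dvd _ hmdvd, Nat.add_mod,
      Nat.mod_eq_zero_of_dvd hz, Nat.add_zero, Nat.mod_mod_of_dvd _ dvd_rfl]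
  -- the permutation
  set g : ZMod n → ZMod n := fun x => x + f x with hg
  have hginj : Function.Injective g := by
    intro x x' hxx
    have hvx : (g x).val % m = x.val % m := hC x (f x) (hfval x)
    have hvx' : (g x').val % m = x'.val % m := hC x' (f x') (hfval x')
    have hmm : x.val % m = x'.val % m := by
      rw [← hvx, ← hvx', hxx]
    have hff : f x = f x' := hfdep x x' hmm
    have h' : x + f x = x' + f x' := hxx
    rw [hff] at h'
    exact add_right_cancel h'
  set y₀ : Equiv.Perm (ZMod n) := Equiv.ofBijective g
    (Finite.injective_iff_bijective.mp hginj) with hy₀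
  have hy₀app : ∀ x, y₀ x = x + f x := fun x => rfl
  have hinv : ∀ x : ZMod n, (y₀ x).val % m = x.val % m := by
    intro x
    rw [hy₀app]
    exact hC x _ (hfval x)
  -- powers of y₀
  have hpow : ∀ (j : ℕ) (x : ZMod n),
      (y₀ ^ j) x = x + (j : ZMod n) * f x ∧ ((y₀ ^ j) x).val % m = x.val % m := by
    intro j
    induction j with
    | zero =>
      intro x
      simp
    | succ j ih =>
      intro x
      have h1 : (y₀ ^ (j + 1)) x = (y₀ ^ j) (y₀ x) := by
        rw [pow_succ, Equiv.Perm.mul_apply]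
      constructor
      · rw [h1, (ih (y₀ x)).1, hfdep (y₀ x) x (hinv x), hy₀app]
        push_cast
        ring
      · rw [h1, (ih (y₀ x)).2, hinv x]
  -- y₀ ^ p = 1
  have hppow : y₀ ^ p = 1 := by
    ext x
    have h0 : (p : ZMod n) * f x = 0 := by
      calc (p : ZMod n) * f x
          = ((m * p : ℕ) : ZMod n) * (e : ZMod n) ^ (n - x.val) := by
            rw [hfmul]; push_cast; ring
        _ = 0 := by rw [← hnm, ZMod.natCast_self, zero_mul]
    rw [(hpow p x).1, h0, add_zero, Equiv.Perm.one_apply]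
  -- y₀ ^ d = 1
  obtain ⟨t, ht⟩ := hpd
  have hdpow : y₀ ^ d = 1 := by
    rw [ht, pow_mul, hppow, one_pow]
  -- y₀ ≠ 1
  have hf0 : f 0 = (m : ZMod n) := by
    have h1 : f 0 = (((m : ℤ) * e ^ (n - (0 : ZMod n).val) : ℤ) : ZMod n) := rfl
    rw [h1, ZMod.val_zero, Nat.sub_zero]
    have h2 := A n 0 (by rw [Nat.mod_eq_zero_of_dvd hmdvd, Nat.zero_mod])
    rw [h2]
    push_cast
    ring
  have hynontriv : y₀ ≠ 1 := by
    intro h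
    have h0 : y₀ 0 = 0 := by rw [h]; rfl
    rw [hy₀app, zero_add, hf0] at h0
    have := ZMod.val_cast_of_lt hmn
    rw [h0, ZMod.val_zero] at this
    exact hm0 this.symm
  -- the natural exponent congruent to e mod p
  set E : ℕ := (e % (p : ℤ)).toNat with hE
  have hppos : (0 : ℤ) < (p : ℤ) := by exact_mod_cast hp.pos
  have hEe : (E : ℤ) = e % (p : ℤ) := by
    rw [hE, Int.toNat_of_nonneg (Int.emod_nonneg e hppos.ne')]
  have hEmod : (E : ℤ) ≡ e [ZMOD (p : ℤ)] := by
    rw [hEe]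
    exact Int.emod_emod_of_dvd e dvd_rfl
  -- pointwise identity : f x = E * f (x + 1)
  have hstep : ∀ x : ZMod n, f x = (E : ZMod n) * f (x + 1) := by
    intro x
    have hb : (x + 1).val = (x.val + 1) % n := by
      rw [ZMod.val_add, ZMod.val_one]
    have hexp : (n - x.val) % m = ((n - (x + 1).val) + 1) % m := by
      rw [hb]
      rcases Nat.lt_or_ge (x.val + 1) n with hlt | hge
      · rw [Nat.mod_eq_of_lt hlt]
        congr 1
        have := x.val_lt
        omega
      · have hxv : x.val + 1 = n := by have := x.val_lt; omega
        have h2 : n - x.val = 1 := by omega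
        rw [hxv, Nat.mod_self, Nat.sub_zero, h2]
        rw [Nat.add_mod, Nat.mod_eq_zero_of_dvd hmdvd, Nat.zero_add,
          Nat.mod_mod_of_dvd _ dvd_rfl]
    have h1 : e ^ (n - x.val) ≡ (E : ℤ) * e ^ (n - (x + 1).val) [ZMOD (p : ℤ)] := by
      calc e ^ (n - x.val)
          ≡ e ^ ((n - (x + 1).val) + 1) [ZMOD (p : ℤ)] :=
            (aux_pow_mod hem _).trans (by rw [hexp]; exact (aux_pow_mod hem _).symm)
        _ = e * e ^ (n - (x + 1).val) := by rw [pow_succ]; ring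
        _ ≡ (E : ℤ) * e ^ (n - (x + 1).val) [ZMOD (p : ℤ)] := hEmod.symm.mul_right _
    have h2 := h1.mul_left' (c := (m : ℤ))
    rw [← hnmZ] at h2
    have h3 : (((m : ℤ) * e ^ (n - x.val) : ℤ) : ZMod n)
        = (((m : ℤ) * ((E : ℤ) * e ^ (n - (x + 1).val)) : ℤ) : ZMod n) :=
      (ZMod.intCast_eq_intCast_iff _ _ _).mpr h2
    calc f x = (((m : ℤ) * e ^ (n - x.val) : ℤ) : ZMod n) := rfl
      _ = (((m : ℤ) * ((E : ℤ) * e ^ (n - (x + 1).val)) : ℤ) : ZMod n) := h3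
      _ = (E : ZMod n) * f (x + 1) := by rw [hf]; push_cast; ring
  -- the conjugation identity with the natural exponent E
  set c : Equiv.Perm (ZMod n) := Equiv.addRight (1 : ZMod n) with hc
  have hcap : ∀ z : ZMod n, c z = z + 1 := fun z => rfl
  have hconjE : c * y₀ * c⁻¹ = y₀ ^ E := by
    rw [mul_inv_eq_iff_eq_mul]
    ext x
    rw [Equiv.Perm.mul_apply, Equiv.Perm.mul_apply, hy₀app, (hpow E (c x)).1,
      hcap, hcap, hstep x]
    ring
  -- zpow e equals pow E
  have hze : y₀ ^ e = y₀ ^ (E : ℤ) := by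
    conv_lhs => rw [← Int.mul_ediv_add_emod e (p : ℤ)]
    rw [zpow_add, zpow_mul, zpow_natCast, hppow, one_zpow, one_mul, hEe]
  exact ⟨y₀, hynontriv, by rw [hze, zpow_natCast]; exact hconjE, hdpow⟩

/-- Corollary 2.9: if `α ∈ Sₙ` is cyclic of length `n ≥ 3` and
`d = gcd(n, e ^ n - 1) ≠ 1`, then `(e*α)` has a non-trivial solution `y ≠ 1` with
`y ^ d = 1`. -/
theorem stmt_10 (n : ℕ) (hn : 3 ≤ n) (e : ℤ) (he : e ∉ ({-1, 0, 1} : Set ℤ))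
    (α : Equiv.Perm (Fin n)) (hα : α.IsCycle) (hcard : α.support.card = n)
    (d : ℕ) (hd : d = Int.gcd (n : ℤ) (e ^ n - 1)) (hd1 : d ≠ 1) :
    ∃ y : Equiv.Perm (Fin n), y ≠ 1 ∧ α * y * α⁻¹ = y ^ e ∧ y ^ d = 1 := by
  haveI : NeZero n := ⟨by omega⟩
  haveI : Fact (1 < n) := ⟨by omega⟩
  obtain ⟨y₀, hy1, hy2, hy3⟩ := zmod_solution n hn e d hd hd1
  -- transport everything to `Fin n`
  set ε : ZMod n ≃ Fin n :=
    { toFun := fun x => ⟨x.val, x.val_lt⟩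
      invFun := fun i => ((i : ℕ) : ZMod n)
      left_inv := fun x => ZMod.natCast_rightInverse x
      right_inv := fun i => Fin.ext (ZMod.val_cast_of_lt i.isLt) } with hε
  set φ := permMulEquiv ε with hφ
  set c : Equiv.Perm (ZMod n) := Equiv.addRight (1 : ZMod n) with hc
  -- `c` is a cycle
  have hcap : ∀ z : ZMod n, c z = z + 1 := fun z => rfl
  have hcpow : ∀ (j : ℕ) (x : ZMod n), (c ^ j) x = x + (j : ZMod n) := by
    intro j
    induction j with
    | zero => intro x; simp
    | succ j ih =>
      intro x
      rw [pow_succ, Equiv.Perm.mul_apply, hcap, ih]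
      push_cast
      ring
  have hcmoves : ∀ x : ZMod n, c x ≠ x := by
    intro x h
    rw [hcap] at h
    have : (1 : ZMod n) = 0 := by
      have h2 := congrArg (fun z => z - x) h
      simp only [add_sub_cancel_left, sub_self] at h2
      exact h2
    exact one_ne_zero this
  have hccycle : c.IsCycle := by
    refine ⟨0, hcmoves 0, ?_⟩
    intro y hy
    refine ⟨(y.val : ℤ), ?_⟩
    rw [zpow_natCast, hcpow, zero_add]
    exact ZMod.natCast_rightInverse y
  -- transport `c`
  have hccycle' : (φ c).IsCycle := isCycle_permMulEquiv ε hccycle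
  have hsupp : (φ c).support = Finset.univ := by
    refine Finset.eq_univ_iff_forall.mpr (fun x => Equiv.Perm.mem_support.mpr ?_)
    rw [hφ, permMulEquiv_apply]
    intro h
    exact hcmoves (ε.symm x) (ε.injective (by rwa [Equiv.apply_symm_apply]))
  have hsuppcard : (φ c).support.card = n := by
    rw [hsupp, Finset.card_univ, Fintype.card_fin]
  -- conjugate to α
  obtain ⟨σ, hσ⟩ := isConj_iff.mp (hccycle'.isConj hα (by rw [hsuppcard, hcard]))
  refine ⟨σ * φ y₀ * σ⁻¹, ?_, ?_, ?_⟩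
  · intro h
    rw [conj_eq_one_iff] at h
    exact hy1 (φ.injective (by rw [h, map_one]))
  · rw [← hσ, conj_zpow]
    have : φ c * φ y₀ * (φ c)⁻¹ = φ y₀ ^ e := by
      rw [← map_inv, ← map_mul, ← map_mul, hy2, map_zpow]
    calc σ * φ c * σ⁻¹ * (σ * φ y₀ * σ⁻¹) * (σ * φ c * σ⁻¹)⁻¹
        = σ * (φ c * φ y₀ * (φ c)⁻¹) * σ⁻¹ := by group
      _ = σ * (φ y₀ ^ e) * σ⁻¹ := by rw [this]
  · rw [conj_pow, ← map_pow, hy3, map_one, mul_one, mul_inv_cancel]
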